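/- Define, for (x,y) in D = {(x,y) : 0 ≤ x ≤ y ≤ 1, x+y ≥ 1}, δ(x,y) = 2y(x+y)/(4y+x-1) and θ(x,y) = 3(x+y)(1-x)/(2y) if x ≤ 1/3; θ(x,y) = 2(x+y)/(y(1+3x)) if x ≥ 1/3 and y ≥ 2/3; θ(x,y) = (x+y)(4(1-x)(1-y)-xy)/(2(x(1-x)+y(1-y)-xy)) if y < 2/3. Then δ(x,y)·θ(x,y) ≥ 1 for all (x,y) ∈ D. -/
import Mathlib


noncomputable def quadPackDensity (x y : ℝ) : ℝ := 2*y*(x+y)/(4*y+x-1)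

noncomputable def quadCoverDensity (x y : ℝ) : ℝ :=
  if x ≤ 1/3 then 3*(x+y)*(1-x)/(2*y)
  else if 2/3 ≤ y then 2*(x+y)/(y*(1+3*x))
  else (x+y)*(4*(1-x)*(1-y)-x*y)/(2*(x*(1-x)+y*(1-y)-x*y))

theorem stmt_18 (x y : ℝ) (hx0 : 0 ≤ x) (hxy : x ≤ y) (hy1 : y ≤ 1) (hsum : 1 ≤ x + y) :
    quadPackDensity x y * quadCoverDensity x y ≥ 1 := by
  have hy : (0:ℝ) < y := by linarith
  have hb : (0:ℝ) < 4*y+x-1 := by linarith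
  unfold quadPackDensity quadCoverDensity
  split_ifs with h1 h2
  · rw [ge_iff_le, div_mul_div_comm, le_div_iff₀ (by positivity)]
    nlinarith [mul_nonneg (sub_nonneg.2 hsum) (sub_nonneg.2 h1), sq_nonneg (x+y-1),
      mul_nonneg hx0 (sub_nonneg.2 hy1), sq_nonneg (x-y), mul_pos hy hy]
  · push_neg at h1
    rw [ge_iff_le, div_mul_div_comm, le_div_iff₀ (by positivity)]
    nlinarith [mul_nonneg hy.le (sq_nonneg (x-2*y+1))]
  · push_neg at h1 h2
    have ha : (0:ℝ) ≤ x+y-1 := by linarith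
    have hyx : (0:ℝ) ≤ y-x := by linarith
    have h23 : (0:ℝ) ≤ 2-3*y := by linarith
    have h1y : (0:ℝ) ≤ 1-y := by linarith
    have h31 : (0:ℝ) ≤ 3*y-1 := by linarith
    have hd : (0:ℝ) < 2*(x*(1-x)+y*(1-y)-x*y) := by
      nlinarith [mul_nonneg hyx ha, mul_pos hy (by linarith : (0:ℝ) < 2-x-2*y)]
    rw [ge_iff_le, div_mul_div_comm, le_div_iff₀ (by positivity)]
    nlinarith [mul_nonneg (mul_nonneg ha hyx) (mul_nonneg hy.le h23),
      mul_nonneg (mul_nonneg (mul_nonneg ha ha) hy.le) (mul_nonneg h1y h23),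
      mul_nonneg (mul_nonneg (mul_nonneg ha ha) hyx) (mul_nonneg h1y h31)]
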